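/- Let d ≥ 1 and let M be a positive definite symmetric d×d real matrix, and define for t > 0 and x ∈ ℝ^d, p_t(x) := (2πt)^{−d/2} (det M)^{−1/2} exp(−x·M^{−1}x/(2t)). For every ε > 0 there exists a constant c_ε such that for all r₁, r₂, r₃ > 0 and all u, v ∈ ℝ^d: ∫_{{z∈ℝ^d : |z| > ε}} dz p_{r₁}(z) p_{r₂}(u−z) p_{r₃}(v−z) ≤ c_ε (r₂+r₃)^{−d/2}. -/

import Mathlib

open scoped BigOperators
open Filter MeasureTheory

/-- Euclidean norm on ℝ^d. -/
noncomputable def rnorm {d : ℕ} (x : Fin d → ℝ) : ℝ := Real.sqrt (∑ i, (x i) ^ 2)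

/-- Gaussian density `p_t(x)` with covariance matrix `M`. -/
noncomputable def gaussDensity (d : ℕ) (M : Matrix (Fin d) (Fin d) ℝ) (t : ℝ)
    (x : Fin d → ℝ) : ℝ :=
  Real.rpow (2 * Real.pi * t) (-(d : ℝ) / 2) * Real.rpow M.det (-(1 : ℝ) / 2) *
    Real.exp (- dotProduct x (M⁻¹.mulVec x) / (2 * t))

/-- Quadratic lower bound for a positive definite matrix. -/
lemma quad_lower_bound {d : ℕ} (hd1 : 1 ≤ d) {N : Matrix (Fin d) (Fin d) ℝ}
    (hN : N.PosDef) :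
    ∃ a : ℝ, 0 < a ∧ ∀ x : Fin d → ℝ,
      a * ∑ i, x i ^ 2 ≤ dotProduct x (N.mulVec x) := by
  classical
  set f : (Fin d → ℝ) → ℝ := fun x => dotProduct x (N.mulVec x) with hf
  have hfc : Continuous f := by
    have : f = fun x : Fin d → ℝ => ∑ i, x i * ∑ j, N i j * x j := by
      funext x; simp [hf, dotProduct, Matrix.mulVec]
    rw [this]
    exact continuous_finset_sum _ fun i _ =>
      (continuous_apply i).mul
        (continuous_finset_sum _ fun j _ => continuous_const.mul (continuous_apply j))
  set S : Set (Fin d → ℝ) := {x | ∑ i, x i ^ 2 = 1} with hS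
  have hSc : IsCompact S := by
    have hclosed : IsClosed S :=
      isClosed_eq (continuous_finset_sum _ fun i _ => (continuous_apply i).pow 2)
        continuous_const
    have hsub : S ⊆ Metric.closedBall 0 1 := by
      intro x hx
      rw [Metric.mem_closedBall, dist_zero_right]
      refine (pi_norm_le_iff_of_nonneg zero_le_one).mpr fun i => ?_
      have hx1 : ∑ j, x j ^ 2 = 1 := hx
      rw [Real.norm_eq_abs, ← sq_le_one_iff_abs_le_one]
      calc x i ^ 2 ≤ ∑ j, x j ^ 2 :=
            Finset.single_le_sum (fun j _ => sq_nonneg (x j)) (Finset.mem_univ i)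
        _ = 1 := hx1
    exact (isCompact_closedBall (0 : Fin d → ℝ) 1).of_isClosed_subset hclosed hsub
  have hSne : S.Nonempty := by
    have hd0 : 0 < d := hd1
    refine ⟨(fun j => if j = ⟨0, hd0⟩ then (1:ℝ) else 0 : Fin d → ℝ), ?_⟩
    have : ∀ j : Fin d, ((if j = ⟨0, hd0⟩ then (1:ℝ) else 0)) ^ 2 =
        if j = ⟨0, hd0⟩ then 1 else 0 := by
      intro j; by_cases h : j = ⟨0, hd0⟩ <;> simp [h]
    simp only [hS, Set.mem_setOf_eq, this, Finset.sum_ite_eq', Finset.mem_univ, if_true]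
  obtain ⟨x₀, hx₀S, hmin⟩ := hSc.exists_isMinOn hSne hfc.continuousOn
  have hx₀ne : x₀ ≠ 0 := by
    intro h
    rw [hS] at hx₀S
    simp only [Set.mem_setOf_eq, h] at hx₀S
    simp at hx₀S
  have ha : 0 < f x₀ := by
    have := hN.dotProduct_mulVec_pos hx₀ne
    simpa [hf] using this
  refine ⟨f x₀, ha, fun x => ?_⟩
  by_cases hx : x = 0
  · simp [hx, hf]
  · set s : ℝ := ∑ i, x i ^ 2 with hs
    have hspos : 0 < s := by
      obtain ⟨i, hi⟩ := Function.ne_iff.mp hx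
      refine Finset.sum_pos' (fun j _ => sq_nonneg _) ⟨i, Finset.mem_univ i, ?_⟩
      have : x i ≠ 0 := by simpa using hi
      positivity
    set r : ℝ := Real.sqrt s with hr
    have hrpos : 0 < r := Real.sqrt_pos.mpr hspos
    have hr2 : r ^ 2 = s := Real.sq_sqrt hspos.le
    set y : Fin d → ℝ := r⁻¹ • x with hy
    have hyS : y ∈ S := by
      rw [hS]
      simp only [Set.mem_setOf_eq, hy, Pi.smul_apply, smul_eq_mul, mul_pow,
        ← Finset.mul_sum]
      rw [← hs]
      field_simp
      rw [hr2]
    have hfy : f y = r⁻¹ ^ 2 * f x := by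
      simp only [hf, hy, smul_dotProduct, Matrix.mulVec_smul,
        dotProduct_smul, smul_eq_mul]
      ring
    have hle : f x₀ ≤ f y := hmin hyS
    rw [hfy] at hle
    have hr2' : r⁻¹ ^ 2 = s⁻¹ := by rw [inv_pow, hr2]
    rw [hr2'] at hle
    calc f x₀ * s ≤ s⁻¹ * f x * s := by
          exact mul_le_mul_of_nonneg_right hle hspos.le
      _ = f x := by field_simp
/-- Uniform bound on `t ↦ (2πt)^{-d/2} e^{-b/t}`. -/
lemma sup_bound (d : ℕ) {b : ℝ} (hb : 0 < b) :
    ∃ K : ℝ, 0 < K ∧ ∀ t : ℝ, 0 < t →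
      (2 * Real.pi * t) ^ (-(d : ℝ) / 2) * Real.exp (-(b / t)) ≤ K := by
  refine ⟨max 1 ((d.factorial : ℝ) * ((2 * Real.pi * b)⁻¹) ^ d),
    lt_of_lt_of_le one_pos (le_max_left _ _), fun t ht => ?_⟩
  have hx : 0 < 2 * Real.pi * t := by positivity
  rcases le_total 1 (2 * Real.pi * t) with h | h
  · refine le_trans ?_ (le_max_left _ _)
    have h1 : (2 * Real.pi * t) ^ (-(d : ℝ) / 2) ≤ 1 :=
      Real.rpow_le_one_of_one_le_of_nonpos h (by
        have : (0:ℝ) ≤ d := Nat.cast_nonneg d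
        linarith)
    have h2 : Real.exp (-(b / t)) ≤ 1 := by
      rw [Real.exp_le_one_iff]
      have : 0 ≤ b / t := by positivity
      linarith
    calc (2 * Real.pi * t) ^ (-(d : ℝ) / 2) * Real.exp (-(b / t)) ≤ 1 * 1 := by
          exact mul_le_mul h1 h2 (Real.exp_pos _).le zero_le_one
      _ = 1 := by ring
  · refine le_trans ?_ (le_max_right _ _)
    have h1 : (2 * Real.pi * t) ^ (-(d : ℝ) / 2) ≤ (2 * Real.pi * t) ^ (-(d : ℝ)) :=
      Real.rpow_le_rpow_of_exponent_ge hx h (by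
        have : (0:ℝ) ≤ d := Nat.cast_nonneg d
        linarith)
    have h2 : Real.exp (-(b / t)) ≤ (d.factorial : ℝ) * (t / b) ^ d := by
      have hterm : (b / t) ^ d / (d.factorial : ℝ) ≤ Real.exp (b / t) := by
        have h0 : 0 ≤ b / t := by positivity
        calc (b / t) ^ d / (d.factorial : ℝ)
            ≤ ∑ i ∈ Finset.range (d + 1), (b / t) ^ i / (i.factorial : ℝ) := by
              exact Finset.single_le_sum
                (f := fun i => (b / t) ^ i / (i.factorial : ℝ))
                (fun i _ => by positivity) (Finset.self_mem_range_succ d)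
          _ ≤ Real.exp (b / t) := Real.sum_le_exp_of_nonneg h0 _
      have hbt : 0 < (b / t) ^ d / (d.factorial : ℝ) := by positivity
      rw [Real.exp_neg]
      have := inv_anti₀ hbt hterm
      refine le_trans this (le_of_eq ?_)
      rw [div_pow]
      field_simp
      rw [← mul_pow]
      congr 1
      field_simp
    have hnn : 0 ≤ (2 * Real.pi * t) ^ (-(d : ℝ)) := (Real.rpow_pos_of_pos hx _).le
    calc (2 * Real.pi * t) ^ (-(d : ℝ) / 2) * Real.exp (-(b / t))
        ≤ (2 * Real.pi * t) ^ (-(d : ℝ)) * ((d.factorial : ℝ) * (t / b) ^ d) :=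
          mul_le_mul h1 h2 (Real.exp_pos _).le hnn
      _ = (d.factorial : ℝ) * ((2 * Real.pi * b)⁻¹) ^ d := by
          rw [show (-(d:ℝ)) = -((d:ℕ) : ℝ) from rfl, Real.rpow_neg hx.le,
            Real.rpow_natCast]
          have hπ : (0:ℝ) < Real.pi := Real.pi_pos
          rw [inv_pow, div_pow, mul_pow, mul_pow]
          field_simp
          ring
/-- Gaussian integral on `Fin d → ℝ`. -/
lemma gauss_int {d : ℕ} {b : ℝ} (hb : 0 < b) (v : Fin d → ℝ) :
    Integrable (fun z : Fin d → ℝ => Real.exp (-b * ∑ i, (v i - z i) ^ 2)) ∧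
    (∫ z : Fin d → ℝ, Real.exp (-b * ∑ i, (v i - z i) ^ 2)) =
      (Real.pi / b) ^ ((d : ℝ) / 2) := by
  have hrw : ∀ z : Fin d → ℝ, Real.exp (-b * ∑ i, (v i - z i) ^ 2)
      = ∏ i, Real.exp (-b * (v i - z i) ^ 2) := by
    intro z
    rw [← Real.exp_sum, Finset.mul_sum]
  have hint1 : ∀ c : ℝ, Integrable (fun t : ℝ => Real.exp (-b * (c - t) ^ 2)) := by
    intro c
    exact (integrable_exp_neg_mul_sq hb).comp_sub_left c
  constructor
  · simp only [hrw]
    exact Integrable.fintype_prod (f := fun i (t : ℝ) => Real.exp (-b * (v i - t) ^ 2))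
      fun i => hint1 (v i)
  · simp only [hrw]
    rw [MeasureTheory.integral_fintype_prod_volume_eq_prod
      (f := fun i (t : ℝ) => Real.exp (-b * (v i - t) ^ 2))]
    have h1 : ∀ i : Fin d, (∫ t : ℝ, Real.exp (-b * (v i - t) ^ 2))
        = Real.sqrt (Real.pi / b) := by
      intro i
      rw [MeasureTheory.integral_sub_left_eq_self
        (fun t : ℝ => Real.exp (-b * t ^ 2)) volume (v i)]
      exact integral_gaussian b
    simp only [h1, Finset.prod_const, Finset.card_univ, Fintype.card_fin]
    rw [Real.sqrt_eq_rpow, ← Real.rpow_natCast ((Real.pi / b) ^ ((1:ℝ)/2)) d,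
      ← Real.rpow_mul (by positivity)]
    congr 1
    ring
lemma gaussDensity_pos {d : ℕ} {M : Matrix (Fin d) (Fin d) ℝ} (hMpos : M.PosDef)
    {t : ℝ} (ht : 0 < t) (x : Fin d → ℝ) : 0 < gaussDensity d M t x := by
  have hdet := hMpos.det_pos
  unfold gaussDensity
  have h1 : 0 < Real.rpow (2 * Real.pi * t) (-(d : ℝ) / 2) :=
    Real.rpow_pos_of_pos (by positivity) _
  have h2 : 0 < Real.rpow M.det (-(1 : ℝ) / 2) := Real.rpow_pos_of_pos hdet _
  exact mul_pos (mul_pos h1 h2) (Real.exp_pos _)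

lemma quad_cont {d : ℕ} (N : Matrix (Fin d) (Fin d) ℝ) :
    Continuous fun x : Fin d → ℝ => dotProduct x (N.mulVec x) := by
  have : (fun x : Fin d → ℝ => dotProduct x (N.mulVec x))
      = fun x : Fin d → ℝ => ∑ i, x i * ∑ j, N i j * x j := by
    funext x; simp [dotProduct, Matrix.mulVec]
  rw [this]
  exact continuous_finset_sum _ fun i _ =>
    (continuous_apply i).mul
      (continuous_finset_sum _ fun j _ => continuous_const.mul (continuous_apply j))

lemma gaussDensity_cont {d : ℕ} (M : Matrix (Fin d) (Fin d) ℝ) (t : ℝ) :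
    Continuous (gaussDensity d M t) := by
  unfold gaussDensity
  exact continuous_const.mul
    (Real.continuous_exp.comp (((quad_cont M⁻¹).neg).div_const _))

lemma main_aux {d : ℕ} (M : Matrix (Fin d) (Fin d) ℝ) (hMpos : M.PosDef)
    {a K ε : ℝ} (ha : 0 < a)
    (hquad : ∀ x : Fin d → ℝ, a * ∑ i, x i ^ 2 ≤ dotProduct x (M⁻¹.mulVec x))
    (hε : 0 < ε)
    (hKbd : ∀ t : ℝ, 0 < t →
      (2 * Real.pi * t) ^ (-(d : ℝ) / 2) * Real.exp (-(a * ε ^ 2 / 2 / t)) ≤ K)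
    {r₁ r₂ r₃ : ℝ} (h1 : 0 < r₁) (h2 : 0 < r₂) (h3 : 0 < r₃) (h23 : r₃ ≤ r₂)
    (u v : Fin d → ℝ) :
    (∫ z in {z : Fin d → ℝ | ε < rnorm z},
        gaussDensity d M r₁ z * gaussDensity d M r₂ (u - z) *
          gaussDensity d M r₃ (v - z)) ≤
      (K * (M.det ^ (-(1 : ℝ) / 2)) ^ 3 * (Real.pi * a) ^ (-(d : ℝ) / 2)) *
        (r₂ + r₃) ^ (-(d : ℝ) / 2) := by
  have hπ : (0:ℝ) < Real.pi := Real.pi_pos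
  have hdet := hMpos.det_pos
  set D : ℝ := M.det ^ (-(1 : ℝ) / 2) with hDdef
  have hD0 : 0 < D := Real.rpow_pos_of_pos hdet _
  set e : ℝ := -(d : ℝ) / 2 with he
  have hK0 : 0 < K := by
    refine lt_of_lt_of_le ?_ (hKbd 1 one_pos)
    have : 0 < (2 * Real.pi * 1) ^ (-(d : ℝ) / 2) := Real.rpow_pos_of_pos (by positivity) _
    positivity
  set b₃ : ℝ := a / (2 * r₃) with hb₃def
  have hb₃ : 0 < b₃ := by positivity
  set S : Set (Fin d → ℝ) := {z : Fin d → ℝ | ε < rnorm z} with hSdef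
  set C : ℝ := K * D ^ 3 * Real.pi ^ e * (r₂ + r₃) ^ e * (2 * Real.pi * r₃) ^ e with hCdef
  have hC0 : 0 < C := by
    have h1' : (0:ℝ) < Real.pi ^ e := Real.rpow_pos_of_pos hπ _
    have h2' : (0:ℝ) < (r₂ + r₃) ^ e := Real.rpow_pos_of_pos (by positivity) _
    have h3' : (0:ℝ) < (2 * Real.pi * r₃) ^ e := Real.rpow_pos_of_pos (by positivity) _
    positivity
  set g : (Fin d → ℝ) → ℝ := fun z => C * Real.exp (-b₃ * ∑ i, (v i - z i) ^ 2)
    with hgdef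
  set f : (Fin d → ℝ) → ℝ := fun z =>
    gaussDensity d M r₁ z * gaussDensity d M r₂ (u - z) * gaussDensity d M r₃ (v - z)
    with hfdef
  have hq0 : ∀ w : Fin d → ℝ, 0 ≤ dotProduct w (M⁻¹.mulVec w) := by
    intro w
    refine le_trans ?_ (hquad w)
    positivity
  -- pointwise bound on S
  have h2r1 : (0:ℝ) < 2 * r₁ := by linarith
  have h2r2 : (0:ℝ) < 2 * r₂ := by linarith
  have h2r3 : (0:ℝ) < 2 * r₃ := by linarith
  have hpt : ∀ z ∈ S, f z ≤ g z := by
    intro z hz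
    have hz2 : ε ^ 2 ≤ ∑ i, z i ^ 2 := by
      have hlt : ε < Real.sqrt (∑ i, z i ^ 2) := hz
      exact le_of_lt ((Real.lt_sqrt hε.le).mp hlt)
    -- factor 1 bound
    have hb1 : (2 * Real.pi * r₁) ^ e *
        Real.exp (- dotProduct z (M⁻¹.mulVec z) / (2 * r₁)) ≤ K := by
      have hqz : a * ε ^ 2 ≤ dotProduct z (M⁻¹.mulVec z) :=
        le_trans (mul_le_mul_of_nonneg_left hz2 ha.le) (hquad z)
      have harith : - dotProduct z (M⁻¹.mulVec z) / (2 * r₁)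
          ≤ -(a * ε ^ 2 / 2 / r₁) := by
        rw [show -(a * ε ^ 2 / 2 / r₁) = -(a * ε ^ 2) / (2 * r₁) by ring]
        exact (div_le_div_iff_of_pos_right h2r1).mpr (neg_le_neg hqz)
      refine le_trans ?_ (hKbd r₁ h1)
      rw [he]
      exact mul_le_mul_of_nonneg_left (Real.exp_le_exp.mpr harith)
        (Real.rpow_pos_of_pos (by positivity) _).le
    -- factor 2 bounds
    have hb2exp : Real.exp (- dotProduct (u - z) (M⁻¹.mulVec (u - z)) / (2 * r₂))
        ≤ 1 := by
      rw [Real.exp_le_one_iff, neg_div]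
      exact neg_nonpos_of_nonneg (div_nonneg (hq0 _) h2r2.le)
    have hb2pow : (2 * Real.pi * r₂) ^ e ≤ Real.pi ^ e * (r₂ + r₃) ^ e := by
      rw [← Real.mul_rpow hπ.le (by positivity)]
      refine Real.rpow_le_rpow_of_nonpos (by positivity) ?_ (by
        rw [he]
        have : (0:ℝ) ≤ d := Nat.cast_nonneg d
        linarith)
      nlinarith
    -- factor 3 bound
    have hb3 : Real.exp (- dotProduct (v - z) (M⁻¹.mulVec (v - z)) / (2 * r₃))
        ≤ Real.exp (-b₃ * ∑ i, (v i - z i) ^ 2) := by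
      refine Real.exp_le_exp.mpr ?_
      have hq3 : a * ∑ i, (v i - z i) ^ 2
          ≤ dotProduct (v - z) (M⁻¹.mulVec (v - z)) := by
        have := hquad (v - z)
        simpa [Pi.sub_apply] using this
      rw [show -b₃ * ∑ i, (v i - z i) ^ 2
          = -(a * ∑ i, (v i - z i) ^ 2) / (2 * r₃) by rw [hb₃def]; ring]
      exact (div_le_div_iff_of_pos_right h2r3).mpr (neg_le_neg hq3)
    -- combine
    have hfeq : f z = ((2 * Real.pi * r₁) ^ e *
        Real.exp (- dotProduct z (M⁻¹.mulVec z) / (2 * r₁))) *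
        ((2 * Real.pi * r₂) ^ e) *
        (Real.exp (- dotProduct (u - z) (M⁻¹.mulVec (u - z)) / (2 * r₂))) *
        ((2 * Real.pi * r₃) ^ e * D ^ 3) *
        (Real.exp (- dotProduct (v - z) (M⁻¹.mulVec (v - z)) / (2 * r₃))) := by
      rw [hfdef]
      simp only [gaussDensity, Real.rpow_eq_pow, ← hDdef, ← he]
      ring
    rw [hfeq, hgdef, hCdef]
    calc ((2 * Real.pi * r₁) ^ e *
        Real.exp (- dotProduct z (M⁻¹.mulVec z) / (2 * r₁))) *
        ((2 * Real.pi * r₂) ^ e) *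
        (Real.exp (- dotProduct (u - z) (M⁻¹.mulVec (u - z)) / (2 * r₂))) *
        ((2 * Real.pi * r₃) ^ e * D ^ 3) *
        (Real.exp (- dotProduct (v - z) (M⁻¹.mulVec (v - z)) / (2 * r₃)))
        ≤ K * (Real.pi ^ e * (r₂ + r₃) ^ e) * 1 * ((2 * Real.pi * r₃) ^ e * D ^ 3) *
          Real.exp (-b₃ * ∑ i, (v i - z i) ^ 2) := by
          have hA1 : 0 ≤ (2 * Real.pi * r₁) ^ e *
              Real.exp (- dotProduct z (M⁻¹.mulVec z) / (2 * r₁)) := by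
            have : (0:ℝ) < (2 * Real.pi * r₁) ^ e := Real.rpow_pos_of_pos (by positivity) _
            positivity
          have hA2 : (0:ℝ) ≤ (2 * Real.pi * r₂) ^ e :=
            (Real.rpow_pos_of_pos (by positivity) _).le
          have hA3 : (0:ℝ) ≤ (2 * Real.pi * r₃) ^ e * D ^ 3 := by
            have : (0:ℝ) < (2 * Real.pi * r₃) ^ e := Real.rpow_pos_of_pos (by positivity) _
            positivity
          have hB2 : (0:ℝ) ≤ Real.pi ^ e * (r₂ + r₃) ^ e := by
            have h1' : (0:ℝ) < Real.pi ^ e := Real.rpow_pos_of_pos hπ _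
            have h2' : (0:ℝ) < (r₂ + r₃) ^ e := Real.rpow_pos_of_pos (by positivity) _
            positivity
          gcongr
      _ = K * D ^ 3 * Real.pi ^ e * (r₂ + r₃) ^ e * (2 * Real.pi * r₃) ^ e *
          Real.exp (-b₃ * ∑ i, (v i - z i) ^ 2) := by ring
  -- measurability of S and integrability
  have hrnc : Continuous fun z : Fin d → ℝ => rnorm z := by
    unfold rnorm
    exact Real.continuous_sqrt.comp
      (continuous_finset_sum _ fun i _ => (continuous_apply i).pow 2)
  have hSmeas : MeasurableSet S := (isOpen_lt continuous_const hrnc).measurableSet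
  have hgint : Integrable g := ((gauss_int hb₃ v).1.const_mul C)
  have hfc : Continuous f := by
    rw [hfdef]
    have hc1 : Continuous fun z : Fin d → ℝ => gaussDensity d M r₁ z :=
      gaussDensity_cont M r₁
    have hc2 : Continuous fun z : Fin d → ℝ => gaussDensity d M r₂ (u - z) :=
      (gaussDensity_cont M r₂).comp (continuous_const.sub continuous_id)
    have hc3 : Continuous fun z : Fin d → ℝ => gaussDensity d M r₃ (v - z) :=
      (gaussDensity_cont M r₃).comp (continuous_const.sub continuous_id)
    exact (hc1.mul hc2).mul hc3
  have hfpos : ∀ z, 0 < f z := by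
    intro z
    rw [hfdef]
    exact mul_pos (mul_pos (gaussDensity_pos hMpos h1 z) (gaussDensity_pos hMpos h2 _))
      (gaussDensity_pos hMpos h3 _)
  have hgpos : ∀ z, 0 < g z := fun z => mul_pos hC0 (Real.exp_pos _)
  have hfS : IntegrableOn f S := by
    refine Integrable.mono hgint.integrableOn hfc.aestronglyMeasurable ?_
    refine ae_restrict_of_forall_mem hSmeas fun z hzS => ?_
    rw [Real.norm_eq_abs, Real.norm_eq_abs, abs_of_pos (hfpos z), abs_of_pos (hgpos z)]
    exact hpt z hzS
  -- the chain of inequalities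
  have step1 : (∫ z in S, f z) ≤ ∫ z in S, g z :=
    MeasureTheory.setIntegral_mono_on hfS hgint.integrableOn hSmeas hpt
  have step2 : (∫ z in S, g z) ≤ ∫ z, g z :=
    MeasureTheory.setIntegral_le_integral hgint (Filter.Eventually.of_forall
      fun z => (hgpos z).le)
  have step3 : (∫ z, g z) = C * (Real.pi / b₃) ^ ((d : ℝ) / 2) := by
    rw [hgdef, MeasureTheory.integral_const_mul, (gauss_int hb₃ v).2]
  have hπb : Real.pi / b₃ = (2 * Real.pi * r₃) / a := by
    rw [hb₃def]; field_simp
  have key : (2 * Real.pi * r₃) ^ e * ((2 * Real.pi * r₃) / a) ^ ((d : ℝ) / 2)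
      = a ^ e := by
    rw [Real.div_rpow (by positivity) ha.le, he,
      show (-(d:ℝ) / 2) = -((d:ℝ) / 2) by ring,
      Real.rpow_neg (by positivity : (0:ℝ) ≤ 2 * Real.pi * r₃),
      Real.rpow_neg ha.le]
    have hBpos : (0:ℝ) < (2 * Real.pi * r₃) ^ ((d:ℝ) / 2) :=
      Real.rpow_pos_of_pos (by positivity) _
    field_simp
  have step4 : C * (Real.pi / b₃) ^ ((d : ℝ) / 2)
      = (K * D ^ 3 * (Real.pi * a) ^ e) * (r₂ + r₃) ^ e := by
    rw [hπb, hCdef]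
    rw [show K * D ^ 3 * Real.pi ^ e * (r₂ + r₃) ^ e * (2 * Real.pi * r₃) ^ e *
        ((2 * Real.pi * r₃) / a) ^ ((d : ℝ) / 2)
        = K * D ^ 3 * Real.pi ^ e * (r₂ + r₃) ^ e *
          ((2 * Real.pi * r₃) ^ e * ((2 * Real.pi * r₃) / a) ^ ((d : ℝ) / 2)) by ring,
      key, Real.mul_rpow hπ.le ha.le]
    ring
  calc (∫ z in S, f z) ≤ ∫ z, g z := le_trans step1 step2
    _ = (K * D ^ 3 * (Real.pi * a) ^ e) * (r₂ + r₃) ^ e := by rw [step3, step4]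

/-- For every ε > 0 there is a constant c_ε with
`∫_{|z|>ε} p_{r₁}(z) p_{r₂}(u−z) p_{r₃}(v−z) dz ≤ c_ε (r₂+r₃)^{−d/2}` for all
r₁,r₂,r₃ > 0 and all u,v ∈ ℝ^d. -/
theorem stmt9 (d : ℕ) (hd1 : 1 ≤ d)
    (M : Matrix (Fin d) (Fin d) ℝ) (hMsymm : M.IsSymm) (hMpos : M.PosDef) :
    ∀ ε : ℝ, 0 < ε → ∃ c : ℝ, ∀ r₁ r₂ r₃ : ℝ, 0 < r₁ → 0 < r₂ → 0 < r₃ →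
      ∀ u v : Fin d → ℝ,
        (∫ z in {z : Fin d → ℝ | ε < rnorm z},
            gaussDensity d M r₁ z * gaussDensity d M r₂ (u - z) *
              gaussDensity d M r₃ (v - z)) ≤
          c * (r₂ + r₃) ^ (-(d : ℝ) / 2) := by
  intro ε hε
  obtain ⟨a, ha, hquad⟩ := quad_lower_bound hd1 hMpos.inv
  obtain ⟨K, hK, hKbd⟩ := sup_bound d (show (0:ℝ) < a * ε ^ 2 / 2 by positivity)
  refine ⟨K * (M.det ^ (-(1 : ℝ) / 2)) ^ 3 * (Real.pi * a) ^ (-(d : ℝ) / 2),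
    fun r₁ r₂ r₃ h1 h2 h3 u v => ?_⟩
  have hKbd' : ∀ t : ℝ, 0 < t →
      (2 * Real.pi * t) ^ (-(d : ℝ) / 2) * Real.exp (-(a * ε ^ 2 / 2 / t)) ≤ K :=
    fun t ht => hKbd t ht
  rcases le_total r₃ r₂ with h23 | h23
  · exact main_aux M hMpos ha hquad hε hKbd' h1 h2 h3 h23 u v
  · have hswap := main_aux M hMpos ha hquad hε hKbd' h1 h3 h2 h23 v u
    rw [add_comm r₃ r₂] at hswap
    have heq : ∀ z : Fin d → ℝ,
        gaussDensity d M r₁ z * gaussDensity d M r₂ (u - z) *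
          gaussDensity d M r₃ (v - z)
        = gaussDensity d M r₁ z * gaussDensity d M r₃ (v - z) *
          gaussDensity d M r₂ (u - z) := fun z => by ring
    simp_rw [heq]
    exact hswap
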